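/- For every even x ∈ Z_M (M = 2mn) and every q ≥ 1, the edges (x, x+4q−1 mod M) and (x, x+4q+1 mod M) belong to P_M^q(C_M), where C_M is the M-cycle and P_M shifts even labels by −2 and odd labels by +2 mod M. -/

import Mathlib

/-- The staggered-swap relabeling: even labels shift by `−2`, odd labels by `+2`
(mod `M`). -/
def cyclePerm (M : ℕ) (x : ZMod M) : ZMod M :=
  if x.val % 2 = 0 then x - 2 else x + 2

lemma two_zmod_two : (2 : ZMod 2) = 0 := by decide

lemma parity_iff (M : ℕ) [NeZero M] (h2 : (2 : ℕ) ∣ M) (x : ZMod M) :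
    x.val % 2 = 0 ↔ (ZMod.castHom h2 (ZMod 2)) x = 0 := by
  have key : (ZMod.castHom h2 (ZMod 2)) x = ((x.val : ℕ) : ZMod 2) := by
    conv_lhs => rw [← ZMod.natCast_zmod_val x]
    simp
  rw [key]
  constructor
  · intro h
    rw [← Nat.mod_add_div x.val 2, h]
    push_cast
    simp [two_zmod_two]
  · intro h
    have hv : ((x.val : ℕ) : ZMod 2).val = x.val % 2 := ZMod.val_natCast _ _
    rw [h] at hv
    simpa using hv.symm

lemma phi_two (M : ℕ) (h2 : (2 : ℕ) ∣ M) :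
    (ZMod.castHom h2 (ZMod 2)) (2 : ZMod M) = 0 := by
  rw [map_ofNat]; decide

lemma even_iter (M : ℕ) [NeZero M] (h2 : (2 : ℕ) ∣ M) :
    ∀ q (x : ZMod M), x.val % 2 = 0 →
      (cyclePerm M)^[q] x = x - 2 * (q : ZMod M) := by
  intro q
  induction q with
  | zero => intro x hx; simp
  | succ k ih =>
    intro x hx
    rw [Function.iterate_succ_apply]
    have hstep : cyclePerm M x = x - 2 := by simp [cyclePerm, hx]
    have hpar : (x - 2 : ZMod M).val % 2 = 0 := by
      rw [parity_iff M h2] at hx ⊢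
      rw [map_sub, hx, phi_two M h2, sub_zero]
    rw [hstep, ih _ hpar]
    push_cast
    ring

lemma odd_iter (M : ℕ) [NeZero M] (h2 : (2 : ℕ) ∣ M) :
    ∀ q (x : ZMod M), x.val % 2 = 1 →
      (cyclePerm M)^[q] x = x + 2 * (q : ZMod M) := by
  intro q
  induction q with
  | zero => intro x hx; simp
  | succ k ih =>
    intro x hx
    rw [Function.iterate_succ_apply]
    have hstep : cyclePerm M x = x + 2 := by simp [cyclePerm, hx]
    have hpar : (x + 2 : ZMod M).val % 2 = 1 := by
      have hx0 : ¬ x.val % 2 = 0 := by omega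
      rw [parity_iff M h2] at hx0
      have h0 : ¬ (x + 2 : ZMod M).val % 2 = 0 := by
        rw [parity_iff M h2, map_add, phi_two M h2, add_zero]
        exact hx0
      omega
    rw [hstep, ih _ hpar]
    push_cast
    ring

/-- For every even `x ∈ Z_M` (`M = 2mn`) and every `q ≥ 1`, the edges
`(x, x+4q−1 mod M)` and `(x, x+4q+1 mod M)` belong to `P_M^q(C_M)`, where `C_M`
is the `M`-cycle and `P_M` shifts even labels by `−2` and odd labels by `+2`
mod `M`. -/
theorem shifted_cycle_edges
    (M m n : ℕ) (hm : 1 ≤ m) (hn : 1 ≤ n) (hM : M = 2 * m * n)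
    (x : ZMod M) (hx : x.val % 2 = 0) (q : ℕ) (hq : 1 ≤ q) :
    (∃ a b : ZMod M, (b = a + 1 ∨ a = b + 1) ∧
        (cyclePerm M)^[q] a = x ∧ (cyclePerm M)^[q] b = x + ((4 * q - 1 : ℕ) : ZMod M))
    ∧ (∃ a b : ZMod M, (b = a + 1 ∨ a = b + 1) ∧
        (cyclePerm M)^[q] a = x ∧ (cyclePerm M)^[q] b = x + ((4 * q + 1 : ℕ) : ZMod M)) := by
  have hMpos : 0 < M := by
    rw [hM]; exact Nat.mul_pos (Nat.mul_pos (by norm_num) hm) hn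
  haveI : NeZero M := ⟨by omega⟩
  have h2 : (2 : ℕ) ∣ M := ⟨m * n, by rw [hM]; ring⟩
  set φ := ZMod.castHom h2 (ZMod 2) with hφ
  have hφx : φ x = 0 := (parity_iff M h2 x).mp hx
  set a : ZMod M := x + 2 * (q : ZMod M) with ha
  have hφa : φ a = 0 := by
    rw [ha, map_add, map_mul, map_natCast, hφ, phi_two M h2, hφx]
    ring
  have haeven : a.val % 2 = 0 := (parity_iff M h2 a).mpr hφa
  have haiter : (cyclePerm M)^[q] a = x := by
    rw [even_iter M h2 q a haeven, ha]; ring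
  have hoddit : ∀ b : ZMod M, φ b = 1 → (cyclePerm M)^[q] b = b + 2 * (q : ZMod M) := by
    intro b hb
    apply odd_iter M h2
    have h0 : ¬ b.val % 2 = 0 := by
      rw [parity_iff M h2, hb]; decide
    omega
  have hcast : ((4 * q - 1 : ℕ) : ZMod M) = 4 * (q : ZMod M) - 1 := by
    have h1 : (1 : ℕ) ≤ 4 * q := by omega
    push_cast [Nat.cast_sub h1]
    ring
  constructor
  · refine ⟨a, a - 1, Or.inr (by ring), haiter, ?_⟩
    have hb : φ (a - 1) = 1 := by
      rw [map_sub, hφa, map_one]; decide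
    rw [hoddit _ hb, hcast, ha]
    ring
  · refine ⟨a, a + 1, Or.inl rfl, haiter, ?_⟩
    have hb : φ (a + 1) = 1 := by
      rw [map_add, hφa, map_one, zero_add]
    rw [hoddit _ hb, ha]
    push_cast
    ring
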